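/- Let a,b ∈ ℝ, g ∈ 𝓑_0^0 and let B be a medial limit with respect to (Ω,𝒜,P) under which the class 𝓑_a^b is closed. Then equation (E_g) has a solution in 𝓑_a^b if and only if g is admissible for B and equation (E_0) has a solution in 𝓑_a^b. -/

import Mathlib

open MeasureTheory unitInterval

noncomputable section

/-- A bounded real sequence. -/
def IsBddSeq (x : ℕ → ℝ) : Prop := ∃ C : ℝ, ∀ n, |x n| ≤ C

/-- A Banach limit: a linear (on bounded sequences), positive, shift-invariant and
normalized functional on the space of bounded real sequences. -/
structure BanachLimit where
  toFun : (ℕ → ℝ) → ℝ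
  map_add : ∀ x y : ℕ → ℝ, IsBddSeq x → IsBddSeq y →
    toFun (fun n => x n + y n) = toFun x + toFun y
  map_smul : ∀ (c : ℝ) (x : ℕ → ℝ), IsBddSeq x →
    toFun (fun n => c * x n) = c * toFun x
  nonneg : ∀ x : ℕ → ℝ, IsBddSeq x → (∀ n, 0 ≤ x n) → 0 ≤ toFun x
  shift : ∀ x : ℕ → ℝ, IsBddSeq x → toFun (fun n => x (n + 1)) = toFun x
  norm_one : toFun (fun _ => (1 : ℝ)) = 1

/-- A medial limit with respect to a measure `P`: a Banach limit which commutes with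
integration of uniformly bounded sequences of measurable functions. -/
def BanachLimit.IsMedial {Ω : Type*} [MeasurableSpace Ω] (B : BanachLimit)
    (P : Measure Ω) : Prop :=
  ∀ h : ℕ → Ω → ℝ, (∃ C : ℝ, ∀ m ω, |h m ω| ≤ C) → (∀ m, Measurable (h m)) →
    Measurable (fun ω => B.toFun (fun m => h m ω)) ∧
      ∫ ω, B.toFun (fun m => h m ω) ∂P = B.toFun (fun m => ∫ ω, h m ω ∂P)

/-- The operator `T`, `(Th)(x) = ∫_Ω h(f(x,ω)) dP(ω)`. -/
def Tof {Ω : Type*} [MeasurableSpace Ω] (P : Measure Ω)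
    (f : unitInterval → Ω → unitInterval) (h : unitInterval → ℝ) :
    unitInterval → ℝ :=
  fun x => ∫ ω, h (f x ω) ∂P

/-- The supremum norm of a function on `[0,1]`. -/
def supNorm (h : unitInterval → ℝ) : ℝ := ⨆ x, |h x|

/-- Membership in `𝓜([0,1],ℝ)`: `h` is bounded and `ω ↦ h (f x ω)` is measurable
for every `x`. -/
def MemM {Ω : Type*} [MeasurableSpace Ω]
    (f : unitInterval → Ω → unitInterval) (h : unitInterval → ℝ) : Prop :=
  (∃ C : ℝ, ∀ x, |h x| ≤ C) ∧ ∀ x, Measurable fun ω => h (f x ω)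

/-- The function `B_h(x) = B((T^m h(x))_{m ≥ 1})`. -/
def BLof {Ω : Type*} [MeasurableSpace Ω] (P : Measure Ω)
    (f : unitInterval → Ω → unitInterval) (B : BanachLimit)
    (h : unitInterval → ℝ) : unitInterval → ℝ :=
  fun x => B.toFun fun m => (Tof P f)^[m + 1] h x

/-- The function `g_k = Σ_{l=0}^{k-1} T^l g` (meaningful for `k ≥ 1`). -/
def gk {Ω : Type*} [MeasurableSpace Ω] (P : Measure Ω)
    (f : unitInterval → Ω → unitInterval) (g : unitInterval → ℝ) (k : ℕ) :
    unitInterval → ℝ :=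
  fun x => ∑ l ∈ Finset.range k, (Tof P f)^[l] g x

/-- The family `𝒢 = {g_k : k ≥ 1}` is bounded in the supremum norm. -/
def GBdd {Ω : Type*} [MeasurableSpace Ω] (P : Measure Ω)
    (f : unitInterval → Ω → unitInterval) (g : unitInterval → ℝ) : Prop :=
  ∃ C : ℝ, ∀ k : ℕ, 1 ≤ k → ∀ x, |gk P f g k x| ≤ C

/-- The function `B_*(x) = B((g_k(x))_{k ≥ 1})`. -/
def BStar {Ω : Type*} [MeasurableSpace Ω] (P : Measure Ω)
    (f : unitInterval → Ω → unitInterval) (B : BanachLimit)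
    (g : unitInterval → ℝ) : unitInterval → ℝ :=
  fun x => B.toFun fun k => gk P f g (k + 1) x

/-- `φ` satisfies equation (E_g): `ω ↦ φ(f(x,ω))` is measurable for every `x` and
`φ(x) = ∫_Ω φ(f(x,ω)) dP(ω) + g(x)` for every `x`. -/
def SatEq {Ω : Type*} [MeasurableSpace Ω] (P : Measure Ω)
    (f : unitInterval → Ω → unitInterval) (g φ : unitInterval → ℝ) : Prop :=
  (∀ x, Measurable fun ω => φ (f x ω)) ∧
    ∀ x, φ x = (∫ ω, φ (f x ω) ∂P) + g x

/-- The class `𝓑_a^b` is closed under the Banach limit `B`. -/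
def ClosedUnder {Ω : Type*} [MeasurableSpace Ω] (P : Measure Ω)
    (f : unitInterval → Ω → unitInterval) (𝓑 : Submodule ℝ (unitInterval → ℝ))
    (a b : ℝ) (B : BanachLimit) : Prop :=
  ∀ h : unitInterval → ℝ, h ∈ 𝓑 → h 0 = a → h 1 = b →
    BLof P f B h ∈ 𝓑 ∧ BLof P f B h 0 = a ∧ BLof P f B h 1 = b

section Helpers

variable {Ω : Type*} [MeasurableSpace Ω] (P : Measure Ω) [IsProbabilityMeasure P]
  (f : unitInterval → Ω → unitInterval)

lemma BanachLimit.const (B : BanachLimit) (c : ℝ) : B.toFun (fun _ => c) = c := by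
  have h1 : IsBddSeq (fun _ => (1 : ℝ)) := ⟨1, fun n => by simp⟩
  have h := B.map_smul c (fun _ => 1) h1
  simpa [B.norm_one] using h

lemma BanachLimit.sub (B : BanachLimit) (x y : ℕ → ℝ) (hx : IsBddSeq x) (hy : IsBddSeq y) :
    B.toFun (fun n => x n - y n) = B.toFun x - B.toFun y := by
  obtain ⟨Cy, hCy⟩ := hy
  have hny : IsBddSeq (fun n => (-1 : ℝ) * y n) := ⟨Cy, fun n => by simpa using hCy n⟩
  have e : (fun n => x n - y n) = fun n => x n + (-1 : ℝ) * y n := funext fun n => by ring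
  rw [e, B.map_add x _ hx hny, B.map_smul (-1) y ⟨Cy, hCy⟩]
  ring

lemma integrable_comp {h : unitInterval → ℝ} (hm : MemM f h) (x : unitInterval) :
    Integrable (fun ω => h (f x ω)) P := by
  obtain ⟨⟨C, hC⟩, hmeas⟩ := hm
  refine ⟨(hmeas x).aestronglyMeasurable, ?_⟩
  exact MeasureTheory.HasFiniteIntegral.of_bounded (C := C)
    (Filter.Eventually.of_forall fun ω => by simpa [Real.norm_eq_abs] using hC (f x ω))

lemma abs_Tof_le {h : unitInterval → ℝ} {C : ℝ} (hC : ∀ y, |h y| ≤ C) (x : unitInterval) :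
    |Tof P f h x| ≤ C := by
  have h1 := norm_integral_le_of_norm_le_const (μ := P) (f := fun ω => h (f x ω)) (C := C)
    (Filter.Eventually.of_forall fun ω => by simpa [Real.norm_eq_abs] using hC (f x ω))
  simpa [Tof, Real.norm_eq_abs] using h1

lemma iter_bound {h : unitInterval → ℝ} (hh : MemM f h) :
    ∃ C : ℝ, ∀ k x, |(Tof P f)^[k] h x| ≤ C := by
  obtain ⟨⟨C, hC⟩, -⟩ := hh
  refine ⟨C, fun k => ?_⟩
  induction k with
  | zero => simpa using hC
  | succ k ih =>
    intro x
    rw [Function.iterate_succ_apply']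
    exact abs_Tof_le P f ih x

variable (𝓑 : Submodule ℝ (unitInterval → ℝ))

lemma iter_mem (h𝓑T : ∀ h ∈ 𝓑, Tof P f h ∈ 𝓑) {h : unitInterval → ℝ} (hh : h ∈ 𝓑) :
    ∀ k, (Tof P f)^[k] h ∈ 𝓑 := by
  intro k
  induction k with
  | zero => simpa using hh
  | succ k ih => rw [Function.iterate_succ_apply']; exact h𝓑T _ ih

lemma gk_mem (h𝓑T : ∀ h ∈ 𝓑, Tof P f h ∈ 𝓑) {g : unitInterval → ℝ} (hg : g ∈ 𝓑) (k : ℕ) :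
    gk P f g k ∈ 𝓑 := by
  have e : gk P f g k = ∑ l ∈ Finset.range k, (Tof P f)^[l] g := by
    funext x; simp [gk]
  rw [e]
  exact Submodule.sum_mem _ fun l _ => iter_mem P f 𝓑 h𝓑T hg l

lemma Tof_gk (h𝓑M : ∀ h ∈ 𝓑, MemM f h) (h𝓑T : ∀ h ∈ 𝓑, Tof P f h ∈ 𝓑)
    {g : unitInterval → ℝ} (hg : g ∈ 𝓑) (k : ℕ) (x : unitInterval) :
    Tof P f (gk P f g k) x = gk P f g (k + 1) x - g x := by
  have h1 : Tof P f (gk P f g k) x = ∑ l ∈ Finset.range k, (Tof P f)^[l + 1] g x := by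
    show (∫ ω, (∑ l ∈ Finset.range k, (Tof P f)^[l] g (f x ω)) ∂P) = _
    rw [integral_finset_sum _ fun l _ =>
      integrable_comp P f (h𝓑M _ (iter_mem P f 𝓑 h𝓑T hg l)) x]
    refine Finset.sum_congr rfl fun l _ => ?_
    rw [Function.iterate_succ_apply']
    rfl
  have h2 : gk P f g (k + 1) x = (∑ l ∈ Finset.range k, (Tof P f)^[l + 1] g x) + g x := by
    show (∑ l ∈ Finset.range (k + 1), (Tof P f)^[l] g x) = _
    rw [Finset.sum_range_succ']
    simp
  rw [h1, h2]
  ring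

lemma Tof_BLof (h𝓑M : ∀ h ∈ 𝓑, MemM f h) (h𝓑T : ∀ h ∈ 𝓑, Tof P f h ∈ 𝓑)
    (B : BanachLimit) (hB : B.IsMedial P) {φ : unitInterval → ℝ} (hφ : φ ∈ 𝓑)
    (x : unitInterval) : Tof P f (BLof P f B φ) x = BLof P f B φ x := by
  obtain ⟨C, hC⟩ := iter_bound P f (h𝓑M _ hφ)
  obtain ⟨-, hint⟩ := hB (fun m ω => (Tof P f)^[m + 1] φ (f x ω))
    ⟨C, fun m ω => hC (m + 1) (f x ω)⟩
    (fun m => (h𝓑M _ (iter_mem P f 𝓑 h𝓑T hφ (m + 1))).2 x)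
  have h0 : Tof P f (BLof P f B φ) x
      = ∫ ω, B.toFun (fun m => (Tof P f)^[m + 1] φ (f x ω)) ∂P := rfl
  rw [h0, hint]
  have e : (fun m => ∫ ω, (Tof P f)^[m + 1] φ (f x ω) ∂P)
      = fun m => (Tof P f)^[m + 1 + 1] φ x := by
    funext m
    rw [Function.iterate_succ_apply' (Tof P f) (m + 1) φ]
    rfl
  rw [e]
  exact B.shift (fun m => (Tof P f)^[m + 1] φ x) ⟨C, fun m => hC (m + 1) x⟩

lemma Tof_BStar (h𝓑M : ∀ h ∈ 𝓑, MemM f h) (h𝓑T : ∀ h ∈ 𝓑, Tof P f h ∈ 𝓑)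
    (B : BanachLimit) (hB : B.IsMedial P) {g : unitInterval → ℝ} (hg : g ∈ 𝓑)
    (hGB : GBdd P f g) (x : unitInterval) :
    Tof P f (BStar P f B g) x = BStar P f B g x - g x := by
  obtain ⟨C, hC⟩ := hGB
  obtain ⟨-, hint⟩ := hB (fun k ω => gk P f g (k + 1) (f x ω))
    ⟨C, fun k ω => hC (k + 1) (Nat.le_add_left 1 k) (f x ω)⟩
    (fun k => (h𝓑M _ (gk_mem P f 𝓑 h𝓑T hg (k + 1))).2 x)
  have h0 : Tof P f (BStar P f B g) x
      = ∫ ω, B.toFun (fun k => gk P f g (k + 1) (f x ω)) ∂P := rfl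
  rw [h0, hint]
  have e : (fun k => ∫ ω, gk P f g (k + 1) (f x ω) ∂P)
      = fun k => gk P f g (k + 1 + 1) x - g x := by
    funext k
    exact Tof_gk P f 𝓑 h𝓑M h𝓑T hg (k + 1) x
  rw [e]
  obtain ⟨Cg, hCg⟩ := (h𝓑M _ hg).1
  rw [B.sub (fun k => gk P f g (k + 1 + 1) x) (fun _ => g x)
      ⟨C, fun k => hC (k + 1 + 1) (by omega) x⟩ ⟨Cg, fun _ => hCg x⟩,
    B.const (g x),
    B.shift (fun k => gk P f g (k + 1) x) ⟨C, fun k => hC (k + 1) (Nat.le_add_left 1 k) x⟩]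
  rfl

end Helpers

/-- If `g ∈ 𝓑_0^0` and `𝓑_a^b` is closed under a medial limit `B`,
then (E_g) has a solution in `𝓑_a^b` if and only if `g` is admissible for `B`
and (E_0) has a solution in `𝓑_a^b`. -/
theorem stmt_12 {Ω : Type*} [MeasurableSpace Ω] (P : Measure Ω) [IsProbabilityMeasure P]
    (f : unitInterval → Ω → unitInterval)
    (hf0 : ∀ ω, f 0 ω = 0) (hf1 : ∀ ω, f 1 ω = 1)
    (𝓑 : Submodule ℝ (unitInterval → ℝ))
    (h𝓑M : ∀ h ∈ 𝓑, MemM f h)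
    (h𝓑T : ∀ h ∈ 𝓑, Tof P f h ∈ 𝓑)
    (a b : ℝ) (B : BanachLimit) (hB : B.IsMedial P)
    (hclosed : ClosedUnder P f 𝓑 a b B)
    (g : unitInterval → ℝ) (hg : g ∈ 𝓑) (hg0 : g 0 = 0) (hg1 : g 1 = 0) :
    (∃ φ : unitInterval → ℝ, φ ∈ 𝓑 ∧ φ 0 = a ∧ φ 1 = b ∧ SatEq P f g φ) ↔
      ((GBdd P f g ∧ BStar P f B g ∈ 𝓑 ∧
          BStar P f B g 0 = 0 ∧ BStar P f B g 1 = 0) ∧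
        ∃ Φ : unitInterval → ℝ, Φ ∈ 𝓑 ∧ Φ 0 = a ∧ Φ 1 = b ∧
          SatEq P f (fun _ => 0) Φ) := by
  constructor
  · rintro ⟨φ, hφmem, hφ0, hφ1, hmeasφ, heqφ⟩
    obtain ⟨hΦmem, hΦ0, hΦ1⟩ := hclosed φ hφmem hφ0 hφ1
    obtain ⟨Cφ, hCφ⟩ := iter_bound P f (h𝓑M _ hφmem)
    -- recursion: T^k φ = T^(k+1) φ + T^k g
    have hrec : ∀ k x, (Tof P f)^[k] φ x = (Tof P f)^[k + 1] φ x + (Tof P f)^[k] g x := by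
      intro k
      induction k with
      | zero => intro x; simpa [Tof] using heqφ x
      | succ k ih =>
        intro x
        have l1 : (Tof P f)^[k + 1] φ x = ∫ ω, (Tof P f)^[k] φ (f x ω) ∂P := by
          rw [Function.iterate_succ_apply']; rfl
        have l2 : (fun ω => (Tof P f)^[k] φ (f x ω))
            = fun ω => (Tof P f)^[k + 1] φ (f x ω) + (Tof P f)^[k] g (f x ω) :=
          funext fun ω => ih (f x ω)
        have i1 : Integrable (fun ω => (Tof P f)^[k + 1] φ (f x ω)) P :=
          integrable_comp P f (h𝓑M _ (iter_mem P f 𝓑 h𝓑T hφmem (k + 1))) x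
        have i2 : Integrable (fun ω => (Tof P f)^[k] g (f x ω)) P :=
          integrable_comp P f (h𝓑M _ (iter_mem P f 𝓑 h𝓑T hg k)) x
        rw [l1, l2, integral_add i1 i2]
        congr 1
        · rw [Function.iterate_succ_apply' (Tof P f) (k + 1) φ]; rfl
        · rw [Function.iterate_succ_apply' (Tof P f) k g]; rfl
    -- telescoping: g_k = φ - T^k φ
    have tele : ∀ k x, gk P f g k x = φ x - (Tof P f)^[k] φ x := by
      intro k x
      have e : ∀ l, (Tof P f)^[l] g x = (Tof P f)^[l] φ x - (Tof P f)^[l + 1] φ x := by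
        intro l; have := hrec l x; linarith
      calc gk P f g k x
          = ∑ l ∈ Finset.range k, ((Tof P f)^[l] φ x - (Tof P f)^[l + 1] φ x) :=
            Finset.sum_congr rfl fun l _ => e l
        _ = (Tof P f)^[0] φ x - (Tof P f)^[k] φ x :=
            Finset.sum_range_sub' (fun l => (Tof P f)^[l] φ x) k
        _ = φ x - (Tof P f)^[k] φ x := by simp
    have hGB : GBdd P f g := by
      refine ⟨2 * Cφ, fun k _ x => ?_⟩
      rw [tele k x]
      have h1 : |φ x| ≤ Cφ := by simpa using hCφ 0 x
      have h2 := hCφ k x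
      have := abs_sub (φ x) ((Tof P f)^[k] φ x)
      calc |φ x - (Tof P f)^[k] φ x| ≤ |φ x| + |(Tof P f)^[k] φ x| := abs_sub _ _
        _ ≤ 2 * Cφ := by linarith
    -- B_* = φ - BLof φ
    have hBS : BStar P f B g = fun x => φ x - BLof P f B φ x := by
      funext x
      show B.toFun (fun k => gk P f g (k + 1) x) = _
      have e : (fun k => gk P f g (k + 1) x)
          = fun k => φ x - (Tof P f)^[k + 1] φ x := funext fun k => tele (k + 1) x
      rw [e, B.sub (fun _ => φ x) (fun k => (Tof P f)^[k + 1] φ x)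
        ⟨Cφ, fun _ => by simpa using hCφ 0 x⟩ ⟨Cφ, fun k => hCφ (k + 1) x⟩, B.const]
      rfl
    have hBSmem : BStar P f B g ∈ 𝓑 := by
      have e : BStar P f B g = φ - BLof P f B φ := by rw [hBS]; rfl
      rw [e]; exact Submodule.sub_mem _ hφmem hΦmem
    refine ⟨⟨hGB, hBSmem, by rw [hBS]; simp [hφ0, hΦ0], by rw [hBS]; simp [hφ1, hΦ1]⟩,
      BLof P f B φ, hΦmem, hΦ0, hΦ1, fun x => (h𝓑M _ hΦmem).2 x, fun x => ?_⟩
    rw [add_zero]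
    exact (Tof_BLof P f 𝓑 h𝓑M h𝓑T B hB hφmem x).symm
  · rintro ⟨⟨hGB, hBSmem, hBS0, hBS1⟩, Φ, hΦmem, hΦ0, hΦ1, hmeasΦ, heqΦ⟩
    refine ⟨Φ + BStar P f B g, Submodule.add_mem _ hΦmem hBSmem,
      by simp [Pi.add_apply, hΦ0, hBS0], by simp [Pi.add_apply, hΦ1, hBS1],
      fun x => (h𝓑M _ (Submodule.add_mem _ hΦmem hBSmem)).2 x, fun x => ?_⟩
    have i1 : Integrable (fun ω => Φ (f x ω)) P := integrable_comp P f (h𝓑M _ hΦmem) x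
    have i2 : Integrable (fun ω => BStar P f B g (f x ω)) P :=
      integrable_comp P f (h𝓑M _ hBSmem) x
    have e0 : (fun ω => (Φ + BStar P f B g) (f x ω))
        = fun ω => Φ (f x ω) + BStar P f B g (f x ω) := rfl
    rw [Pi.add_apply, e0, integral_add i1 i2]
    have e1 : ∫ ω, Φ (f x ω) ∂P = Φ x := by
      have := heqΦ x; simpa using this.symm
    have e2 : ∫ ω, BStar P f B g (f x ω) ∂P = BStar P f B g x - g x :=
      Tof_BStar P f 𝓑 h𝓑M h𝓑T B hB hg hGB x
    rw [e1, e2]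
    ring
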